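/- (Uniform Convergence and Error Bound I, Theorem 3.1.) In the multistage setup, suppose that for each t = 0,…,K the exact value function v*_t is convex on Z_t. Then for all t = 0,…,K and all x ∈ Z_t: 0 ≤ v̂_t(x) − v*_t(x) ≤ ∑_{k=t+1}^K L_k·δ. In particular v̂_t converges uniformly to v*_t on Z_t as δ → 0. -/

import Mathlib

open scoped BigOperators

lemma helper_gamma {n M J : ℕ} (node : Fin M → EuclideanSpace ℝ (Fin n))
    (cell : Fin J → Set (Fin M)) (δ : ℝ)
    (hδ : ∀ j : Fin J, ∀ i ∈ cell j, ∀ k ∈ cell j, ‖node i - node k‖ ≤ δ)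
    (j : Fin J) (y : EuclideanSpace ℝ (Fin n))
    (hy : y ∈ convexHull ℝ (node '' cell j)) :
    ∃ γ : Fin M → ℝ, (∀ i, 0 ≤ γ i) ∧ (∑ i, γ i = 1) ∧
      (∀ i, γ i ≠ 0 → i ∈ cell j) ∧ (∑ i, γ i • node i = y) ∧
      (∀ i, i ∈ cell j → ‖node i - y‖ ≤ δ) := by
  obtain ⟨ι, _, w, z, hw0, hw1, hz, hx⟩ := mem_convexHull_iff_exists_fintype.mp hy
  choose φ hφmem hφeq using fun i => hz i
  set γ : Fin M → ℝ := fun mm => ∑ i ∈ Finset.univ.filter (fun i => φ i = mm), w i with hγ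
  have hγ0 : ∀ mm, 0 ≤ γ mm := fun mm => Finset.sum_nonneg fun i _ => hw0 i
  have hγsum : ∑ mm, γ mm = 1 := by
    rw [hγ]; rw [Finset.sum_fiberwise]; exact hw1
  have hγcell : ∀ mm, γ mm ≠ 0 → mm ∈ cell j := by
    intro mm h
    obtain ⟨i, hi, -⟩ := Finset.exists_ne_zero_of_sum_ne_zero h
    rw [Finset.mem_filter] at hi
    exact hi.2 ▸ hφmem i
  have hγeq : ∑ mm, γ mm • node mm = y := by
    have : ∀ mm : Fin M, γ mm • node mm
        = ∑ i ∈ Finset.univ.filter (fun i => φ i = mm), w i • z i := by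
      intro mm
      rw [hγ, Finset.sum_smul]
      refine Finset.sum_congr rfl fun i hi => ?_
      rw [Finset.mem_filter] at hi
      rw [← hi.2, hφeq i]
    rw [Finset.sum_congr rfl fun mm _ => this mm, Finset.sum_fiberwise, hx]
  refine ⟨γ, hγ0, hγsum, hγcell, hγeq, ?_⟩
  intro mm hmm
  have hrep : node mm - y = ∑ i, w i • (node mm - z i) := by
    rw [← hx]
    simp only [smul_sub, Finset.sum_sub_distrib]
    congr 1
    rw [← Finset.sum_smul, hw1, one_smul]
  calc ‖node mm - y‖ = ‖∑ i, w i • (node mm - z i)‖ := by rw [hrep]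
    _ ≤ ∑ i, ‖w i • (node mm - z i)‖ := norm_sum_le _ _
    _ ≤ ∑ i, w i * δ := by
        refine Finset.sum_le_sum fun i _ => ?_
        rw [norm_smul, Real.norm_eq_abs, abs_of_nonneg (hw0 i)]
        refine mul_le_mul_of_nonneg_left ?_ (hw0 i)
        rw [← hφeq i]
        exact hδ j mm hmm (φ i) (hφmem i)
    _ = δ := by rw [← Finset.sum_mul, hw1, one_mul]

/-- Theorem 3.1 (Uniform Convergence and Error Bound I). -/
theorem stmt_3 {n m N M J K : ℕ}
    (U : EuclideanSpace ℝ (Fin n) → Set (EuclideanSpace ℝ (Fin m)))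
    (r : EuclideanSpace ℝ (Fin n) → EuclideanSpace ℝ (Fin m) → ℝ)
    (f : EuclideanSpace ℝ (Fin n) → EuclideanSpace ℝ (Fin m) → Fin N → EuclideanSpace ℝ (Fin n))
    (p : Fin N → ℝ) (hp : ∀ s, 0 ≤ p s) (hpsum : ∑ s, p s = 1)
    (node : Fin M → EuclideanSpace ℝ (Fin n))
    (cell : Fin J → Set (Fin M))
    (δ : ℝ)
    (hδ : ∀ j : Fin J, ∀ i ∈ cell j, ∀ k ∈ cell j, ‖node i - node k‖ ≤ δ)
    (Z : ℕ → Set (EuclideanSpace ℝ (Fin n)))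
    (hZconv : ∀ t ≤ K, Convex ℝ (Z t))
    (hZcpt : ∀ t ≤ K, IsCompact (Z t))
    (hZmono : ∀ t, t < K → Z t ⊆ Z (t + 1))
    (hUne : ∀ t ≤ K, ∀ x ∈ Z t, (U x).Nonempty)
    (hfZ : ∀ t < K, ∀ x ∈ Z t, ∀ u ∈ U x, ∀ s, f x u s ∈ Z (t + 1))
    (q : EuclideanSpace ℝ (Fin n) → ℝ)
    (hZcells : ∀ t ≤ K, Z t =
      ⋃ j ∈ {j : Fin J | convexHull ℝ (node '' cell j) ⊆ Z t}, convexHull ℝ (node '' cell j))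
    (vstar : ℕ → EuclideanSpace ℝ (Fin n) → ℝ)
    (hvstarK : ∀ x ∈ Z K, vstar K x = q x)
    (hvstar : ∀ t < K, ∀ x ∈ Z t, IsLeast
      {z : ℝ | ∃ u ∈ U x, z = r x u + ∑ s, p s * vstar (t + 1) (f x u s)} (vstar t x))
    (vhat : ℕ → EuclideanSpace ℝ (Fin n) → ℝ)
    (hvhatK : ∀ x ∈ Z K, vhat K x = q x)
    (hvhat : ∀ t < K, ∀ x ∈ Z t, IsLeast
      {z : ℝ | ∃ u ∈ U x, ∃ γ : Fin N → Fin M → ℝ,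
        (∀ s, γ s ∈ stdSimplex ℝ (Fin M)) ∧
        (∀ s i, node i ∉ Z (t + 1) → γ s i = 0) ∧
        (∀ s, f x u s = ∑ i, γ s i • node i) ∧
        z = r x u + ∑ s, ∑ i, p s * γ s i * vhat (t + 1) (node i)} (vhat t x))
    (L : ℕ → ℝ) (hL : ∀ k, 0 ≤ L k)
    (hvstarlip : ∀ k ≤ K, ∀ j : Fin J, convexHull ℝ (node '' cell j) ⊆ Z k →
      ∀ y ∈ convexHull ℝ (node '' cell j), ∀ y' ∈ convexHull ℝ (node '' cell j),
        |vstar k y - vstar k y'| ≤ L k * ‖y - y'‖)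
    (hvstarconv : ∀ t ≤ K, ConvexOn ℝ (Z t) (vstar t)) :
    ∀ t ≤ K, ∀ x ∈ Z t,
      0 ≤ vhat t x - vstar t x ∧
      vhat t x - vstar t x ≤ (∑ k ∈ Finset.Icc (t + 1) K, L k) * δ := by
  suffices H : ∀ d t, t + d = K → ∀ x ∈ Z t,
      0 ≤ vhat t x - vstar t x ∧
      vhat t x - vstar t x ≤ (∑ k ∈ Finset.Icc (t + 1) K, L k) * δ by
    intro t ht x hx
    exact H (K - t) t (by omega) x hx
  intro d
  induction d with
  | zero =>
    intro t htK x hx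
    have ht : t = K := by omega
    subst ht
    rw [hvhatK x hx, hvstarK x hx, Finset.Icc_eq_empty (by omega)]
    simp
  | succ d ih =>
    intro t htK x hx
    have htK' : t < K := by omega
    have ht1K : t + 1 ≤ K := by omega
    have IH : ∀ y ∈ Z (t + 1), 0 ≤ vhat (t+1) y - vstar (t+1) y ∧
        vhat (t+1) y - vstar (t+1) y ≤ (∑ k ∈ Finset.Icc (t + 2) K, L k) * δ :=
      fun y hy => ih (t+1) (by omega) y hy
    constructor
    · -- lower bound : vstar t x ≤ vhat t x
      obtain ⟨⟨u, hu, γ, hγsimp, hγ0, hγf, hval⟩, -⟩ := hvhat t htK' x hx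
      have h1 : vstar t x ≤ r x u + ∑ s, p s * vstar (t+1) (f x u s) :=
        (hvstar t htK' x hx).2 ⟨u, hu, rfl⟩
      have key : ∀ s, vstar (t+1) (f x u s) ≤ ∑ i, γ s i * vhat (t+1) (node i) := by
        intro s
        set A := Finset.univ.filter (fun i => γ s i ≠ 0) with hA
        have hnode : ∀ i ∈ A, node i ∈ Z (t+1) := by
          intro i hi
          rw [hA, Finset.mem_filter] at hi
          by_contra hc
          exact hi.2 (hγ0 s i hc)
        have hsumA : ∑ i ∈ A, γ s i = 1 := by
          rw [hA, Finset.sum_filter_ne_zero]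
          exact (hγsimp s).2
        have hfA : f x u s = ∑ i ∈ A, γ s i • node i := by
          rw [hγf s]
          refine (Finset.sum_subset (Finset.subset_univ A) fun i _ hi => ?_).symm
          rw [hA, Finset.mem_filter] at hi
          have : γ s i = 0 := by
            by_contra hc; exact hi ⟨Finset.mem_univ i, hc⟩
          rw [this, zero_smul]
        have jensen : vstar (t+1) (∑ i ∈ A, γ s i • node i)
            ≤ ∑ i ∈ A, γ s i • vstar (t+1) (node i) :=
          (hvstarconv (t+1) ht1K).map_sum_le
            (fun i _ => (hγsimp s).1 i) hsumA hnode
        calc vstar (t+1) (f x u s) ≤ ∑ i ∈ A, γ s i • vstar (t+1) (node i) := by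
              rw [hfA]; exact jensen
          _ ≤ ∑ i ∈ A, γ s i * vhat (t+1) (node i) := by
              refine Finset.sum_le_sum fun i hi => ?_
              have h0 := (IH (node i) (hnode i hi)).1
              have := (hγsimp s).1 i
              rw [smul_eq_mul]
              nlinarith
          _ = ∑ i, γ s i * vhat (t+1) (node i) := by
              refine Finset.sum_subset (Finset.subset_univ A) fun i _ hi => ?_
              rw [hA, Finset.mem_filter] at hi
              have : γ s i = 0 := by
                by_contra hc; exact hi ⟨Finset.mem_univ i, hc⟩
              rw [this, zero_mul]
      have h2 : vstar t x ≤ vhat t x := by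
        rw [hval]
        refine h1.trans (add_le_add (le_refl (r x u)) ?_)
        calc ∑ s, p s * vstar (t+1) (f x u s)
            ≤ ∑ s, p s * ∑ i, γ s i * vhat (t+1) (node i) :=
              Finset.sum_le_sum fun s _ => mul_le_mul_of_nonneg_left (key s) (hp s)
          _ = ∑ s, ∑ i, p s * γ s i * vhat (t+1) (node i) := by
              refine Finset.sum_congr rfl fun s _ => ?_
              rw [Finset.mul_sum]
              exact Finset.sum_congr rfl fun i _ => by ring
      linarith
    · -- upper bound
      obtain ⟨⟨u, hu, hvaleq⟩, -⟩ := hvstar t htK' x hx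
      have hys : ∀ s, f x u s ∈ Z (t+1) := hfZ t htK' x hx u hu
      have hcellmem : ∀ s : Fin N, ∃ j : Fin J,
          convexHull ℝ (node '' cell j) ⊆ Z (t+1) ∧ f x u s ∈ convexHull ℝ (node '' cell j) := by
        intro s
        have := hys s
        rw [hZcells (t+1) ht1K] at this
        simpa using this
      choose jj hjZ hjmem using hcellmem
      choose γ hγpos hγsum hγcell hγeq hγnorm using
        fun s => helper_gamma node cell δ hδ (jj s) (f x u s) (hjmem s)
      have hnodeZ : ∀ s i, γ s i ≠ 0 → node i ∈ Z (t+1) := by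
        intro s i hne
        exact hjZ s (subset_convexHull ℝ _ (Set.mem_image_of_mem node (hγcell s i hne)))
      have hhat_le : vhat t x ≤ r x u + ∑ s, ∑ i, p s * γ s i * vhat (t+1) (node i) := by
        refine (hvhat t htK' x hx).2 ⟨u, hu, γ, fun s => ⟨hγpos s, hγsum s⟩, ?_, ?_, rfl⟩
        · intro s i hni
          by_contra hne
          exact hni (hnodeZ s i hne)
        · exact fun s => (hγeq s).symm
      set C : ℝ := ∑ k ∈ Finset.Icc (t + 1) K, L k with hC
      have hCsplit : C = L (t+1) + ∑ k ∈ Finset.Icc (t + 2) K, L k := by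
        rw [hC, show Finset.Icc (t+1) K = insert (t+1) (Finset.Icc (t+2) K) from by
          ext a; simp [Finset.mem_Icc]; omega, Finset.sum_insert (by simp)]
      have inner : ∀ s, ∑ i, γ s i * vhat (t+1) (node i)
          ≤ vstar (t+1) (f x u s) + C * δ := by
        intro s
        have step : ∀ i, γ s i * vhat (t+1) (node i)
            ≤ γ s i * (vstar (t+1) (f x u s) + C * δ) := by
          intro i
          rcases eq_or_ne (γ s i) 0 with h0 | hne
          · rw [h0, zero_mul, zero_mul]
          have hmem : i ∈ cell (jj s) := hγcell s i hne
          have hnZ : node i ∈ Z (t+1) := hnodeZ s i hne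
          have hih := (IH (node i) hnZ).2
          have hlip : |vstar (t+1) (node i) - vstar (t+1) (f x u s)|
              ≤ L (t+1) * ‖node i - f x u s‖ :=
            hvstarlip (t+1) ht1K (jj s) (hjZ s) (node i)
              (subset_convexHull ℝ _ (Set.mem_image_of_mem node hmem)) (f x u s) (hjmem s)
          have hnorm : ‖node i - f x u s‖ ≤ δ := hγnorm s i hmem
          have hLd : L (t+1) * ‖node i - f x u s‖ ≤ L (t+1) * δ :=
            mul_le_mul_of_nonneg_left hnorm (hL (t+1))
          have h1 : vstar (t+1) (node i) - vstar (t+1) (f x u s) ≤ L (t+1) * δ :=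
            (le_abs_self _).trans (hlip.trans hLd)
          have h2 : vhat (t+1) (node i) ≤ vstar (t+1) (f x u s) + C * δ := by
            rw [hCsplit]; linarith
          exact mul_le_mul_of_nonneg_left h2 (hγpos s i)
        calc ∑ i, γ s i * vhat (t+1) (node i)
            ≤ ∑ i, γ s i * (vstar (t+1) (f x u s) + C * δ) := Finset.sum_le_sum fun i _ => step i
          _ = vstar (t+1) (f x u s) + C * δ := by
              rw [← Finset.sum_mul, hγsum s, one_mul]
      have final : vhat t x ≤ vstar t x + C * δ := by
        refine hhat_le.trans ?_
        rw [hvaleq]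
        have : ∑ s, ∑ i, p s * γ s i * vhat (t+1) (node i)
            ≤ ∑ s, p s * (vstar (t+1) (f x u s) + C * δ) := by
          refine Finset.sum_le_sum fun s _ => ?_
          have : ∑ i, p s * γ s i * vhat (t+1) (node i)
              = p s * ∑ i, γ s i * vhat (t+1) (node i) := by
            rw [Finset.mul_sum]
            exact Finset.sum_congr rfl fun i _ => by ring
          rw [this]
          exact mul_le_mul_of_nonneg_left (inner s) (hp s)
        have heq : ∑ s, p s * (vstar (t+1) (f x u s) + C * δ)
            = (∑ s, p s * vstar (t+1) (f x u s)) + C * δ := by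
          rw [Finset.sum_congr rfl fun s _ => mul_add (p s) _ _, Finset.sum_add_distrib,
            ← Finset.sum_mul, hpsum, one_mul]
        linarith [this, heq.le]
      linarith
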